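/- Subset Instability is Lipschitz in the utilities: for any matching with zero-sum transfers (X, τ) and any two utility functions u and ũ, |I(u, X, τ, A) − I(ũ, X, τ, A)| ≤ 2 · Σ_{a∈A} ‖u_a − ũ_a‖_∞, where ‖u_a − ũ_a‖_∞ = max_{a'∈A} |u(a,a') − ũ(a,a')|. -/

import Mathlib

open Finset

/-- A two-sided market: agents `A` partitioned into customers `M` and providers `W`. -/
structure TwoSidedMarket (A : Type*) [Fintype A] [DecidableEq A] where
  M : Finset A
  W : Finset A
  disj : Disjoint M W
  cover : M ∪ W = Finset.univ

variable {A : Type*} [Fintype A] [DecidableEq A]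

/-- `μ` is (the partner map of) a matching on the subset `S` of agents:
it is an involution, agents outside `S` are unmatched, and matched pairs cross sides. -/
def IsMatchingOn (Mkt : TwoSidedMarket A) (S : Finset A) (μ : A → A) : Prop :=
  (∀ a, μ (μ a) = a) ∧ (∀ a, μ a ≠ a → a ∈ S) ∧
  (∀ a, μ a ≠ a → (a ∈ Mkt.M ∧ μ a ∈ Mkt.W) ∨ (a ∈ Mkt.W ∧ μ a ∈ Mkt.M))

/-- Transfers `τ` are zero-sum for the matching `μ`. -/
def ZeroSum (μ : A → A) (τ : A → ℝ) : Prop :=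
  (∀ a, μ a ≠ a → τ a + τ (μ a) = 0) ∧ (∀ a, μ a = a → τ a = 0)

/-- Stability of the market outcome `(μ, τ)` with respect to utilities `u`:
individual rationality and no blocking pairs. -/
def Stable (Mkt : TwoSidedMarket A) (u : A → A → ℝ) (μ : A → A) (τ : A → ℝ) : Prop :=
  (∀ a, 0 ≤ u a (μ a) + τ a) ∧
  (∀ m ∈ Mkt.M, ∀ w ∈ Mkt.W,
    u m w + u w m ≤ (u m (μ m) + τ m) + (u w (μ w) + τ w))

/-- Maximum total utility of a matching on the subset `S`. -/
noncomputable def maxWeight (Mkt : TwoSidedMarket A) (u : A → A → ℝ) (S : Finset A) : ℝ :=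
  sSup {x | ∃ μ, IsMatchingOn Mkt S μ ∧ x = ∑ a ∈ S, u a (μ a)}

/-- Subset Instability of the market outcome `(μ, τ)` with respect to utilities `u`. -/
noncomputable def instability (Mkt : TwoSidedMarket A) (u : A → A → ℝ)
    (μ : A → A) (τ : A → ℝ) : ℝ :=
  sSup {x | ∃ S : Finset A, x = maxWeight Mkt u S - ∑ a ∈ S, (u a (μ a) + τ a)}

section Aux

set_option linter.unusedSectionVars false
set_option linter.unusedVariables false

lemma id_isMatchingOn (Mkt : TwoSidedMarket A) (S : Finset A) :
    IsMatchingOn Mkt S id :=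
  ⟨fun _ => rfl, fun _ h => absurd rfl h, fun _ h => absurd rfl h⟩

lemma maxWeight_bddAbove [Nonempty A] (Mkt : TwoSidedMarket A) (u : A → A → ℝ) (S : Finset A) :
    BddAbove {x | ∃ μ, IsMatchingOn Mkt S μ ∧ x = ∑ a ∈ S, u a (μ a)} := by
  refine ⟨∑ a ∈ S, Finset.univ.sup' Finset.univ_nonempty (u a), ?_⟩
  rintro x ⟨μ, _, rfl⟩
  exact Finset.sum_le_sum fun a _ => Finset.le_sup' (u a) (Finset.mem_univ _)

lemma maxWeight_nonneg [Nonempty A] (Mkt : TwoSidedMarket A) (u : A → A → ℝ)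
    (hu : ∀ a, u a a = 0) (S : Finset A) : 0 ≤ maxWeight Mkt u S :=
  le_csSup (maxWeight_bddAbove Mkt u S) ⟨id, id_isMatchingOn Mkt S, by simp [hu]⟩

lemma maxWeight_lip [Nonempty A] (Mkt : TwoSidedMarket A) (u v : A → A → ℝ)
    (hv : ∀ a, v a a = 0) (S : Finset A) :
    maxWeight Mkt u S ≤ maxWeight Mkt v S
      + ∑ a ∈ S, Finset.univ.sup' Finset.univ_nonempty (fun a' => |u a a' - v a a'|) := by
  apply Real.sSup_le
  · rintro x ⟨μ, hμ, rfl⟩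
    have h1 : ∑ a ∈ S, u a (μ a) ≤ ∑ a ∈ S, v a (μ a)
        + ∑ a ∈ S, Finset.univ.sup' Finset.univ_nonempty (fun a' => |u a a' - v a a'|) := by
      rw [← Finset.sum_add_distrib]
      refine Finset.sum_le_sum fun a _ => ?_
      have h0 : u a (μ a) - v a (μ a) ≤ |u a (μ a) - v a (μ a)| := le_abs_self _
      have h2 : |u a (μ a) - v a (μ a)| ≤
          Finset.univ.sup' Finset.univ_nonempty (fun a' => |u a a' - v a a'|) :=
        Finset.le_sup' (fun a' => |u a a' - v a a'|) (Finset.mem_univ _)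
      linarith
    have h3 : ∑ a ∈ S, v a (μ a) ≤ maxWeight Mkt v S :=
      le_csSup (maxWeight_bddAbove Mkt v S) ⟨μ, hμ, rfl⟩
    linarith
  · have h4 : (0:ℝ) ≤ maxWeight Mkt v S := maxWeight_nonneg Mkt v hv S
    have h5 : (0:ℝ) ≤ ∑ a ∈ S, Finset.univ.sup' Finset.univ_nonempty
        (fun a' => |u a a' - v a a'|) :=
      Finset.sum_nonneg fun a _ =>
        le_trans (abs_nonneg (u a a - v a a))
          (Finset.le_sup' (fun a' => |u a a' - v a a'|) (Finset.mem_univ a))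
    linarith

lemma instability_bddAbove (Mkt : TwoSidedMarket A) (u : A → A → ℝ) (μ : A → A) (τ : A → ℝ) :
    BddAbove {x | ∃ S : Finset A, x = maxWeight Mkt u S - ∑ a ∈ S, (u a (μ a) + τ a)} := by
  have h : {x | ∃ S : Finset A, x = maxWeight Mkt u S - ∑ a ∈ S, (u a (μ a) + τ a)}
      = Set.range (fun S : Finset A => maxWeight Mkt u S - ∑ a ∈ S, (u a (μ a) + τ a)) := by
    ext x; simp [eq_comm]
  rw [h]
  exact (Set.finite_range _).bddAbove

lemma instability_nonneg (Mkt : TwoSidedMarket A) (u : A → A → ℝ) (hu : ∀ a, u a a = 0)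
    (μ : A → A) (τ : A → ℝ) : 0 ≤ instability Mkt u μ τ := by
  have hset : {x : ℝ | ∃ μ, IsMatchingOn Mkt ∅ μ ∧ x = ∑ a ∈ (∅ : Finset A), u a (μ a)}
      = {0} := by
    ext x
    constructor
    · rintro ⟨μ, _, rfl⟩; simp
    · rintro rfl; exact ⟨id, id_isMatchingOn Mkt ∅, by simp⟩
  have hmw : maxWeight Mkt u ∅ = 0 := by
    rw [maxWeight, hset, csSup_singleton]
  have h0 : (0:ℝ) ∈ {x | ∃ S : Finset A, x = maxWeight Mkt u S - ∑ a ∈ S, (u a (μ a) + τ a)} :=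
    ⟨∅, by simp [hmw]⟩
  exact le_csSup (instability_bddAbove Mkt u μ τ) h0

lemma instability_lip [Nonempty A] (Mkt : TwoSidedMarket A) (u v : A → A → ℝ)
    (hu : ∀ a, u a a = 0) (hv : ∀ a, v a a = 0) (μ : A → A) (τ : A → ℝ) :
    instability Mkt u μ τ ≤ instability Mkt v μ τ
      + 2 * ∑ a, Finset.univ.sup' Finset.univ_nonempty (fun a' => |u a a' - v a a'|) := by
  set E := ∑ a, Finset.univ.sup' Finset.univ_nonempty (fun a' => |u a a' - v a a'|) with hE
  have hEterm : ∀ a : A, (0:ℝ) ≤ Finset.univ.sup' Finset.univ_nonempty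
      (fun a' => |u a a' - v a a'|) := fun a =>
    le_trans (abs_nonneg (u a a - v a a))
      (Finset.le_sup' (fun a' => |u a a' - v a a'|) (Finset.mem_univ a))
  have hEnn : (0:ℝ) ≤ E := Finset.sum_nonneg fun a _ => hEterm a
  apply Real.sSup_le
  · rintro x ⟨S, rfl⟩
    have hD : ∑ a ∈ S, Finset.univ.sup' Finset.univ_nonempty
        (fun a' => |u a a' - v a a'|) ≤ E :=
      Finset.sum_le_sum_of_subset_of_nonneg (Finset.subset_univ S)
        (fun a _ _ => hEterm a)
    have h1 := maxWeight_lip Mkt u v hv S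
    have h2 : ∑ a ∈ S, (v a (μ a) + τ a) ≤ ∑ a ∈ S, (u a (μ a) + τ a)
        + ∑ a ∈ S, Finset.univ.sup' Finset.univ_nonempty (fun a' => |u a a' - v a a'|) := by
      rw [← Finset.sum_add_distrib]
      refine Finset.sum_le_sum fun a _ => ?_
      have h0 : v a (μ a) - u a (μ a) ≤ |u a (μ a) - v a (μ a)| := by
        rw [abs_sub_comm]; exact le_abs_self _
      have h3 : |u a (μ a) - v a (μ a)| ≤
          Finset.univ.sup' Finset.univ_nonempty (fun a' => |u a a' - v a a'|) :=
        Finset.le_sup' (fun a' => |u a a' - v a a'|) (Finset.mem_univ _)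
      linarith
    have h4 : maxWeight Mkt v S - ∑ a ∈ S, (v a (μ a) + τ a) ≤ instability Mkt v μ τ :=
      le_csSup (instability_bddAbove Mkt v μ τ) ⟨S, rfl⟩
    linarith
  · have h := instability_nonneg Mkt v hv μ τ
    linarith

end Aux

/-- Subset Instability is Lipschitz in the utilities. -/
theorem instability_lipschitz [Nonempty A]
    (Mkt : TwoSidedMarket A) (u v : A → A → ℝ) (μ : A → A) (τ : A → ℝ)
    (hu : ∀ a, u a a = 0) (hv : ∀ a, v a a = 0)
    (hμ : IsMatchingOn Mkt Finset.univ μ)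
    (hτ : ZeroSum μ τ) :
    |instability Mkt u μ τ - instability Mkt v μ τ| ≤
      2 * ∑ a, Finset.univ.sup' Finset.univ_nonempty (fun a' => |u a a' - v a a'|) := by
  have h1 := instability_lip Mkt u v hu hv μ τ
  have h2 := instability_lip Mkt v u hv hu μ τ
  have h3 : ∀ a : A, Finset.univ.sup' Finset.univ_nonempty (fun a' => |v a a' - u a a'|)
      = Finset.univ.sup' Finset.univ_nonempty (fun a' => |u a a' - v a a'|) := by
    intro a; congr 1; funext a'; rw [abs_sub_comm]
  simp only [h3] at h2
  rw [abs_sub_le_iff]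
  constructor <;> linarith
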